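/- Under the hypotheses of the previous abstract setting: for any w ∈ W and simple reflections u_1,…,u_d ∈ S, one has w P u_1⋯u_d ⊆ ⋃ B w u_{l_1}⋯u_{l_p} P and u_1⋯u_d B w ⊆ ⋃ B u_{l_1}⋯u_{l_p} w P, where the unions run over all strictly increasing sequences (l_1,…,l_p) in {1,…,d} (including the empty sequence). -/

import Mathlib

open scoped Pointwise

section aux

lemma finset_sort_map {α β : Type*} [LinearOrder α] [LinearOrder β] (f : α ↪ β)
    (hf : ∀ a b : α, a ≤ b ↔ f a ≤ f b) (t : Finset α) :
    (t.map f).sort (· ≤ ·) = (t.sort (· ≤ ·)).map f := by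
  rw [Finset.sort, Finset.sort, Finset.map_val]
  exact (Multiset.map_sort f t.val (· ≤ ·) (· ≤ ·) (fun a _ b _ => hf a b)).symm

lemma finset_sort_insert_max {α : Type*} [LinearOrder α] [DecidableEq α] {a : α} {s : Finset α}
    (h : ∀ b ∈ s, b ≤ a) (ha : a ∉ s) :
    (insert a s).sort (· ≤ ·) = s.sort (· ≤ ·) ++ [a] := by
  have p1 : List.Perm ((insert a s).sort (· ≤ ·)) (a :: s.toList) :=
    ((insert a s).sort_perm_toList _).trans (Finset.toList_insert ha)
  have p2 : List.Perm (s.sort (· ≤ ·) ++ [a]) (a :: s.toList) :=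
    (List.perm_append_singleton a _).trans ((s.sort_perm_toList _).cons a)
  refine List.Perm.eq_of_pairwise' (Finset.pairwise_sort _ _) ?_ (p1.trans p2.symm)
  refine List.pairwise_append.2
    ⟨Finset.pairwise_sort _ _, List.pairwise_singleton _ _, ?_⟩
  intro x hx y hy
  rw [List.mem_singleton] at hy
  subst hy
  exact h x ((Finset.mem_sort _).1 hx)

end aux

/-- under the rules `wPs ⊆ BwP ∪ BwsP` and `sBw ⊆ BwP ∪ BswP`,
for any `w ∈ W` and simple reflections `u_1,…,u_d ∈ S` one has
`w P u_1⋯u_d ⊆ ⋃ B w u_{l₁}⋯u_{l_p} P` and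
`u_1⋯u_d B w ⊆ ⋃ B u_{l₁}⋯u_{l_p} w P`, the unions running over all strictly
increasing sequences `(l₁,…,l_p)` in `{1,…,d}` (including the empty one). -/
theorem iterated_wPs_inclusion
    {G W : Type*} [Group G] [Group W]
    (B P : Subgroup G) (n : W → G) (S : Set W)
    (hr1 : ∀ s ∈ S, ∀ w : W,
      ({n w} : Set G) * (P : Set G) * {n s} ⊆
        (B : Set G) * {n w} * (P : Set G) ∪ (B : Set G) * {n (w * s)} * (P : Set G))
    (hr2 : ∀ s ∈ S, ∀ w : W,
      ({n s} : Set G) * (B : Set G) * {n w} ⊆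
        (B : Set G) * {n w} * (P : Set G) ∪ (B : Set G) * {n (s * w)} * (P : Set G))
    (d : ℕ) (u : Fin d → W) (hu : ∀ k, u k ∈ S) (w : W) :
    (({n w} : Set G) * (P : Set G) * {(List.ofFn fun k => n (u k)).prod} ⊆
        ⋃ t : Finset (Fin d),
          (B : Set G) * {n (w * ((t.sort (· ≤ ·)).map u).prod)} * (P : Set G)) ∧
    (({(List.ofFn fun k => n (u k)).prod} : Set G) * (B : Set G) * {n w} ⊆
        ⋃ t : Finset (Fin d),
          (B : Set G) * {n (((t.sort (· ≤ ·)).map u).prod * w)} * (P : Set G)) := by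
  -- two one-step lemmas
  have hBB : ∀ x : G, (B : Set G) * ((B : Set G) * {x} * (P : Set G))
      = (B : Set G) * {x} * (P : Set G) := by
    intro x
    rw [← mul_assoc, ← mul_assoc, coe_mul_coe]
  have hPP : ∀ x : G, (B : Set G) * {x} * (P : Set G) * (P : Set G)
      = (B : Set G) * {x} * (P : Set G) := by
    intro x
    rw [mul_assoc (_ * _), coe_mul_coe]
  have step1 : ∀ s ∈ S, ∀ w' : W,
      (B : Set G) * {n w'} * (P : Set G) * {n s} ⊆
        (B : Set G) * {n w'} * (P : Set G) ∪ (B : Set G) * {n (w' * s)} * (P : Set G) := by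
    intro s hs w'
    calc (B : Set G) * {n w'} * (P : Set G) * {n s}
        = (B : Set G) * ({n w'} * (P : Set G) * {n s}) := by
          rw [mul_assoc, mul_assoc, mul_assoc]
      _ ⊆ (B : Set G) * ((B : Set G) * {n w'} * (P : Set G)
            ∪ (B : Set G) * {n (w' * s)} * (P : Set G)) :=
          Set.mul_subset_mul_left (hr1 s hs w')
      _ = (B : Set G) * {n w'} * (P : Set G)
            ∪ (B : Set G) * {n (w' * s)} * (P : Set G) := by
          rw [Set.mul_union, hBB, hBB]
  have step2 : ∀ s ∈ S, ∀ w' : W,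
      ({n s} : Set G) * ((B : Set G) * {n w'} * (P : Set G)) ⊆
        (B : Set G) * {n w'} * (P : Set G) ∪ (B : Set G) * {n (s * w')} * (P : Set G) := by
    intro s hs w'
    calc ({n s} : Set G) * ((B : Set G) * {n w'} * (P : Set G))
        = ({n s} : Set G) * (B : Set G) * {n w'} * (P : Set G) := by
          rw [mul_assoc, mul_assoc, mul_assoc]
      _ ⊆ ((B : Set G) * {n w'} * (P : Set G)
            ∪ (B : Set G) * {n (s * w')} * (P : Set G)) * (P : Set G) :=
          Set.mul_subset_mul_right (hr2 s hs w')
      _ = (B : Set G) * {n w'} * (P : Set G)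
            ∪ (B : Set G) * {n (s * w')} * (P : Set G) := by
          rw [Set.union_mul, hPP, hPP]
  -- base inclusions
  have hone : ∀ x : G, ({x} : Set G) * (P : Set G) ⊆ (B : Set G) * {x} * (P : Set G) := by
    intro x
    refine Set.mul_subset_mul_right ?_
    intro y hy
    rw [Set.mem_singleton_iff] at hy
    subst hy
    exact ⟨1, B.one_mem, y, rfl, (one_mul y)⟩
  clear hr1 hr2
  induction d generalizing w with
  | zero =>
    constructor
    · intro x hx
      refine Set.mem_iUnion.2 ⟨∅, ?_⟩
      simp only [Finset.sort_empty, List.map_nil, List.prod_nil, mul_one]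
      simp only [List.ofFn_zero, List.prod_nil, Set.singleton_one, mul_one] at hx
      exact hone (n w) hx
    · intro x hx
      refine Set.mem_iUnion.2 ⟨∅, ?_⟩
      simp only [Finset.sort_empty, List.map_nil, List.prod_nil, one_mul]
      simp only [List.ofFn_zero, List.prod_nil, Set.singleton_one, one_mul] at hx
      exact ⟨x, hx, 1, P.one_mem, (mul_one _)⟩
  | succ d ih =>
    constructor
    · -- part 1: peel the last factor
      have hrw : (List.ofFn fun k : Fin (d + 1) => n (u k)).prod
          = (List.ofFn fun i : Fin d => n (u i.castSucc)).prod * n (u (Fin.last d)) := by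
        rw [List.ofFn_succ', List.concat_eq_append, List.prod_append, List.prod_singleton]
      rw [hrw, ← Set.singleton_mul_singleton, ← mul_assoc]
      have h1 := (ih (fun i => u i.castSucc) (fun k => hu _) w).1
      calc ({n w} : Set G) * (P : Set G)
            * {(List.ofFn fun i : Fin d => n (u i.castSucc)).prod} * {n (u (Fin.last d))}
          ⊆ (⋃ t : Finset (Fin d), (B : Set G)
              * {n (w * ((t.sort (· ≤ ·)).map fun i => u i.castSucc).prod)} * (P : Set G))
              * {n (u (Fin.last d))} := Set.mul_subset_mul_right h1
        _ ⊆ ⋃ t : Finset (Fin (d + 1)),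
              (B : Set G) * {n (w * ((t.sort (· ≤ ·)).map u).prod)} * (P : Set G) := by
            rw [Set.iUnion_mul]
            refine Set.iUnion_subset fun t => ?_
            refine (step1 _ (hu _) _).trans (Set.union_subset ?_ ?_)
            · refine Set.subset_iUnion_of_subset (t.map Fin.castSuccEmb) ?_
              rw [finset_sort_map Fin.castSuccEmb
                (fun a b => (Fin.castSucc_le_castSucc_iff).symm) t, List.map_map]
              exact subset_rfl
            · refine Set.subset_iUnion_of_subset
                (insert (Fin.last d) (t.map Fin.castSuccEmb)) ?_
              have hnm : Fin.last d ∉ t.map Fin.castSuccEmb := by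
                simp only [Finset.mem_map]
                rintro ⟨i, -, hi⟩
                exact absurd hi (Fin.castSucc_lt_last i).ne
              rw [finset_sort_insert_max (fun b hb => Fin.le_last b) hnm,
                finset_sort_map Fin.castSuccEmb
                  (fun a b => (Fin.castSucc_le_castSucc_iff).symm) t,
                List.map_append, List.prod_append, List.map_map, List.map_singleton,
                List.prod_singleton, ← mul_assoc]
              exact subset_rfl
    · -- part 2: peel the first factor
      have hrw : (List.ofFn fun k : Fin (d + 1) => n (u k)).prod
          = n (u 0) * (List.ofFn fun i : Fin d => n (u i.succ)).prod := by
        rw [List.ofFn_succ, List.prod_cons]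
      have h2 := (ih (fun i => u i.succ) (fun k => hu _) w).2
      calc ({(List.ofFn fun k : Fin (d + 1) => n (u k)).prod} : Set G) * (B : Set G) * {n w}
          = {n (u 0)}
            * ({(List.ofFn fun i : Fin d => n (u i.succ)).prod} * (B : Set G) * {n w}) := by
            rw [hrw, ← Set.singleton_mul_singleton, mul_assoc ({n (u 0)} : Set G),
              mul_assoc ({n (u 0)} : Set G)]
        _ ⊆ {n (u 0)} * ⋃ t : Finset (Fin d),
              (B : Set G) * {n (((t.sort (· ≤ ·)).map fun i => u i.succ).prod * w)}
                * (P : Set G) := Set.mul_subset_mul_left h2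
        _ ⊆ ⋃ t : Finset (Fin (d + 1)),
              (B : Set G) * {n (((t.sort (· ≤ ·)).map u).prod * w)} * (P : Set G) := by
            rw [Set.mul_iUnion]
            refine Set.iUnion_subset fun t => ?_
            refine (step2 _ (hu _) _).trans (Set.union_subset ?_ ?_)
            · refine Set.subset_iUnion_of_subset (t.map (Fin.succEmb d)) ?_
              rw [finset_sort_map (Fin.succEmb d)
                (fun a b => (Fin.succ_le_succ_iff).symm) t, List.map_map]
              exact subset_rfl
            · refine Set.subset_iUnion_of_subset (insert 0 (t.map (Fin.succEmb d))) ?_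
              have hnm : (0 : Fin (d + 1)) ∉ t.map (Fin.succEmb d) := by
                simp only [Finset.mem_map]
                rintro ⟨i, -, hi⟩
                exact absurd hi (Fin.succ_ne_zero i)
              rw [Finset.sort_insert _ (fun b hb => Fin.zero_le b) hnm,
                finset_sort_map (Fin.succEmb d)
                  (fun a b => (Fin.succ_le_succ_iff).symm) t,
                List.map_cons, List.prod_cons, List.map_map, mul_assoc (u 0)]
              exact subset_rfl
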